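/- Antichain composition principle: let φ be an antichain formula of EF+F⁻¹, let L₁,…,Lₙ be pairwise disjoint tree-definable tree languages, let a₁,…,aₙ ∈ A be leaf labels, and let K be a tree-definable tree language. Then the tree language {t : t[(L₁,φ)→a₁,…,(Lₙ,φ)→aₙ] ∈ K} is tree-definable in EF+F⁻¹. -/

import Mathlib

/- Trees over a two-sorted alphabet: leaves labeled in `A`, inner nodes labeled in `B`. -/
mutual
inductive FTree (A B : Type) : Type where
  | leaf (a : A) : FTree A B
  | node (b : B) (f : FForest A B) : FTree A B
inductive FForest (A B : Type) : Type where
  | single (t : FTree A B) : FForest A B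
  | cons (t : FTree A B) (f : FForest A B) : FForest A B
end

/-- The (nonempty) list of trees constituting a forest. -/
def FForest.toList {A B : Type} : FForest A B → List (FTree A B)
  | .single t => [t]
  | .cons t f => t :: f.toList

/-- Concatenation `s + t` of forests. -/
def FForest.append {A B : Type} : FForest A B → FForest A B → FForest A B
  | .single t, f => .cons t f
  | .cons t f', f => .cons t (f'.append f)

/-- The children of the root of a tree. -/
def FTree.children {A B : Type} : FTree A B → List (FTree A B)
  | .leaf _ => []
  | .node _ f => f.toList

/-- The subtree of `t` rooted at the node reached by the path of child indices, if any.
Nodes of a tree are identified with the valid such paths. -/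
def FTree.subtreeAt {A B : Type} : List ℕ → FTree A B → Option (FTree A B)
  | [], t => some t
  | i :: p, t =>
    match t.children[i]? with
    | some c => FTree.subtreeAt p c
    | none => none

/-- Formulas of the temporal logic EF + F⁻¹ over the two-sorted alphabet `(A, B)`. -/
inductive EFFormula (A B : Type) : Type where
  | leafLab (a : A) : EFFormula A B
  | innerLab (b : B) : EFFormula A B
  | not (φ : EFFormula A B) : EFFormula A B
  | and (φ ψ : EFFormula A B) : EFFormula A B
  | EF (φ : EFFormula A B) : EFFormula A B
  | Finv (φ : EFFormula A B) : EFFormula A B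

/-- Satisfaction of an EF+F⁻¹ formula at the node `x` (a path) of the tree `t`.
`EF φ` holds at `x` iff `φ` holds at some proper descendant of `x`, and `F⁻¹ φ`
holds at `x` iff `φ` holds at some proper ancestor of `x`. -/
def EFSat {A B : Type} (t : FTree A B) : List ℕ → EFFormula A B → Prop
  | x, .leafLab a => FTree.subtreeAt x t = some (.leaf a)
  | x, .innerLab b => ∃ f, FTree.subtreeAt x t = some (.node b f)
  | x, .not φ => ¬ EFSat t x φ
  | x, .and φ ψ => EFSat t x φ ∧ EFSat t x ψ
  | x, .EF φ => ∃ y : List ℕ, x <+: y ∧ x ≠ y ∧ (FTree.subtreeAt y t).isSome ∧ EFSat t y φ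
  | x, .Finv φ => ∃ y : List ℕ, y <+: x ∧ y ≠ x ∧ EFSat t y φ

/-- A formula is true in a tree if it holds at its root. -/
def TreeSat {A B : Type} (t : FTree A B) (φ : EFFormula A B) : Prop := EFSat t [] φ

/-- A tree language is tree-definable if some EF+F⁻¹ formula is true in exactly its trees. -/
def TreeDefinable {A B : Type} (L : Set (FTree A B)) : Prop :=
  ∃ φ : EFFormula A B, ∀ t, t ∈ L ↔ TreeSat t φ

/-- Boolean combinations of languages of the form "some tree of the forest satisfies φ". -/
inductive ForestFormula (A B : Type) : Type where
  | ex (φ : EFFormula A B) : ForestFormula A B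
  | not (Φ : ForestFormula A B) : ForestFormula A B
  | and (Φ Ψ : ForestFormula A B) : ForestFormula A B

def ForestSat {A B : Type} (f : FForest A B) : ForestFormula A B → Prop
  | .ex φ => ∃ t ∈ f.toList, TreeSat t φ
  | .not Φ => ¬ ForestSat f Φ
  | .and Φ Ψ => ForestSat f Φ ∧ ForestSat f Ψ

/-- A forest language is forest-definable in EF+F⁻¹ if it is a Boolean combination of
languages of the form "some tree of the forest satisfies φ". -/
def ForestDefinable {A B : Type} (L : Set (FForest A B)) : Prop :=
  ∃ Φ : ForestFormula A B, ∀ f, f ∈ L ↔ ForestSat f Φ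

/-- A formula `φ` is antichain if in every tree, the set of nodes where `φ` holds is an
antichain with respect to the descendant relation. -/
def AntichainFormula {A B : Type} (φ : EFFormula A B) : Prop :=
  ∀ (t : FTree A B) (x y : List ℕ),
    (FTree.subtreeAt x t).isSome → (FTree.subtreeAt y t).isSome →
    EFSat t x φ → EFSat t y φ → x <+: y → x = y

open Classical in
/- The simultaneous substitution `t[(L₁,φ)→a₁,…,(Lₙ,φ)→aₙ]`: for each node `x` of the
original tree `t0` where `φ` holds (evaluated in `t0`) and whose subtree belongs to some
(necessarily unique, by disjointness) `L i`, the entire subtree rooted at `x` is replaced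
by a single leaf labeled `lab i`.  The auxiliary functions carry the path `p` of the
current subtree inside `t0`. -/
mutual
noncomputable def substAuxT {A B : Type} (t0 : FTree A B) (φ : EFFormula A B) {n : ℕ}
    (L : Fin n → Set (FTree A B)) (lab : Fin n → A) : List ℕ → FTree A B → FTree A B
  | p, .leaf a =>
    if h : EFSat t0 p φ ∧ ∃ i, FTree.leaf a ∈ L i then .leaf (lab h.2.choose)
    else .leaf a
  | p, .node b f =>
    if h : EFSat t0 p φ ∧ ∃ i, FTree.node b f ∈ L i then .leaf (lab h.2.choose)
    else .node b (substAuxF t0 φ L lab p 0 f)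
noncomputable def substAuxF {A B : Type} (t0 : FTree A B) (φ : EFFormula A B) {n : ℕ}
    (L : Fin n → Set (FTree A B)) (lab : Fin n → A) :
    List ℕ → ℕ → FForest A B → FForest A B
  | p, i, .single t => .single (substAuxT t0 φ L lab (p ++ [i]) t)
  | p, i, .cons t f => .cons (substAuxT t0 φ L lab (p ++ [i]) t) (substAuxF t0 φ L lab p (i + 1) f)
end

/-- The tree `t[(L₁,φ)→a₁,…,(Lₙ,φ)→aₙ]`. -/
noncomputable def treeSubst {A B : Type} (φ : EFFormula A B) {n : ℕ}
    (L : Fin n → Set (FTree A B)) (lab : Fin n → A) (t : FTree A B) : FTree A B :=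
  substAuxT t φ L lab [] t

namespace ACP

variable {A B : Type}

lemma sat_not {t : FTree A B} {x φ} : EFSat t x (.not φ) ↔ ¬ EFSat t x φ := Iff.rfl
lemma sat_and {t : FTree A B} {x φ ψ} : EFSat t x (.and φ ψ) ↔ EFSat t x φ ∧ EFSat t x ψ := Iff.rfl
lemma sat_EF {t : FTree A B} {x φ} : EFSat t x (.EF φ) ↔ ∃ y : List ℕ, x <+: y ∧ x ≠ y ∧ (FTree.subtreeAt y t).isSome ∧ EFSat t y φ := Iff.rfl
lemma sat_Finv {t : FTree A B} {x φ} : EFSat t x (.Finv φ) ↔ ∃ y : List ℕ, y <+: x ∧ y ≠ x ∧ EFSat t y φ := Iff.rfl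
lemma sat_leaf {t : FTree A B} {x a} : EFSat t x (.leafLab a) ↔ FTree.subtreeAt x t = some (.leaf a) := Iff.rfl
lemma sat_inner {t : FTree A B} {x b} : EFSat t x (.innerLab b) ↔ ∃ f, FTree.subtreeAt x t = some (.node b f) := Iff.rfl

lemma subtreeAt_nil {t : FTree A B} : FTree.subtreeAt [] t = some t := rfl
lemma subtreeAt_cons {t : FTree A B} {i p} :
    FTree.subtreeAt (i :: p) t = (t.children[i]?).bind (FTree.subtreeAt p) := by
  rw [FTree.subtreeAt]
  cases t.children[i]? <;> rfl

lemma subtreeAt_append (p q : List ℕ) (t : FTree A B) :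
    FTree.subtreeAt (p ++ q) t = (FTree.subtreeAt p t).bind (FTree.subtreeAt q) := by
  induction p generalizing t with
  | nil => simp [subtreeAt_nil]
  | cons i p ih =>
    rw [List.cons_append, subtreeAt_cons, subtreeAt_cons]
    cases t.children[i]? with
    | none => rfl
    | some c => simp [ih]

lemma isSome_of_prefix {p q : List ℕ} {t : FTree A B} (h : p <+: q)
    (hq : (FTree.subtreeAt q t).isSome) : (FTree.subtreeAt p t).isSome := by
  obtain ⟨r, rfl⟩ := h
  rw [subtreeAt_append] at hq
  cases hh : FTree.subtreeAt p t with
  | none => rw [hh] at hq; simp at hq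
  | some u => simp

/-- The substitution predicate: the subtree at `w` gets replaced. -/
def SubstP (φ : EFFormula A B) {n : ℕ} (L : Fin n → Set (FTree A B)) (t : FTree A B)
    (w : List ℕ) : Prop :=
  ∃ v, FTree.subtreeAt w t = some v ∧ EFSat t w φ ∧ ∃ i, v ∈ L i

variable (t : FTree A B) (φ : EFFormula A B) {n : ℕ} (L : Fin n → Set (FTree A B))
  (lab : Fin n → A)

lemma substP_iff {p : List ℕ} {u : FTree A B} (hp : FTree.subtreeAt p t = some u) :
    SubstP φ L t p ↔ (EFSat t p φ ∧ ∃ i, u ∈ L i) := by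
  constructor
  · rintro ⟨v, hv, hs, hi⟩
    rw [hp] at hv; cases hv; exact ⟨hs, hi⟩
  · rintro ⟨hs, hi⟩; exact ⟨u, hp, hs, hi⟩

theorem substAuxF_get : ∀ (f : FForest A B) (p : List ℕ) (i j : ℕ),
    (substAuxF t φ L lab p i f).toList[j]? =
      (f.toList[j]?).map (fun c => substAuxT t φ L lab (p ++ [i + j]) c)
  | .single u, p, i, j => by
    rw [substAuxF]
    cases j with
    | zero => simp [FForest.toList]
    | succ j => simp [FForest.toList]
  | .cons u f, p, i, j => by
    rw [substAuxF]
    cases j with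
    | zero => simp [FForest.toList]
    | succ j =>
      simp only [FForest.toList, List.getElem?_cons_succ, substAuxF_get f p (i+1) j]
      have : i + 1 + j = i + (j + 1) := by omega
      rw [this]

open Classical in
lemma substAuxT_children (p : List ℕ) (u : FTree A B) (j : ℕ) :
    (substAuxT t φ L lab p u).children[j]? =
      if EFSat t p φ ∧ ∃ i, u ∈ L i then none
      else (u.children[j]?).map (fun c => substAuxT t φ L lab (p ++ [j]) c) := by
  cases u with
  | leaf a =>
    rw [substAuxT]
    split_ifs with h <;> simp [FTree.children]
  | node b f =>
    rw [substAuxT]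
    split_ifs with h
    · simp [FTree.children]
    · simp only [FTree.children, substAuxF_get]
      congr 2
      simp

open Classical in
lemma subst_subtreeAt : ∀ (q p : List ℕ) (u : FTree A B), FTree.subtreeAt p t = some u →
    FTree.subtreeAt q (substAuxT t φ L lab p u) =
      if ∃ q', q' <+: q ∧ q' ≠ q ∧ SubstP φ L t (p ++ q') then none
      else (FTree.subtreeAt q u).map (fun v => substAuxT t φ L lab (p ++ q) v) := by
  intro q
  induction q with
  | nil =>
    intro p u hp
    rw [if_neg]
    · simp [subtreeAt_nil]
    · rintro ⟨q', hq', hne, -⟩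
      exact hne (List.prefix_nil.mp hq')
  | cons j q ih =>
    intro p u hp
    rw [subtreeAt_cons, substAuxT_children]
    by_cases h1 : EFSat t p φ ∧ ∃ i, u ∈ L i
    · rw [if_pos h1, if_pos]
      · rfl
      · exact ⟨[], ⟨j :: q, rfl⟩, by simp, by rw [List.append_nil]; exact (substP_iff t φ L hp).mpr h1⟩
    · rw [if_neg h1]
      have hnp : ¬ SubstP φ L t p := fun hs => h1 ((substP_iff t φ L hp).mp hs)
      cases hc : u.children[j]? with
      | none =>
        have : FTree.subtreeAt (j :: q) u = none := by rw [subtreeAt_cons, hc]; rfl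
        rw [this]
        split_ifs <;> rfl
      | some c =>
        have hpc : FTree.subtreeAt (p ++ [j]) t = some c := by
          rw [subtreeAt_append, hp]
          show FTree.subtreeAt [j] u = some c
          rw [subtreeAt_cons, hc]; rfl
        simp only [Option.map_some, Option.bind_some]
        rw [ih (p ++ [j]) c hpc]
        have hcond : (∃ q'', q'' <+: q ∧ q'' ≠ q ∧ SubstP φ L t ((p ++ [j]) ++ q'')) ↔
            (∃ q', q' <+: j :: q ∧ q' ≠ j :: q ∧ SubstP φ L t (p ++ q')) := by
          constructor
          · rintro ⟨q'', h2, h3, h4⟩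
            refine ⟨j :: q'', List.cons_prefix_cons.mpr ⟨rfl, h2⟩, by simpa using h3, ?_⟩
            rwa [List.append_assoc] at h4
          · rintro ⟨q', h2, h3, h4⟩
            cases q' with
            | nil => exact absurd (by simpa using h4) hnp
            | cons j' q'' =>
              obtain ⟨he, h5⟩ := List.cons_prefix_cons.mp h2
              subst he
              exact ⟨q'', h5, by simpa using h3, by rwa [List.append_assoc, List.singleton_append]⟩
        have hval : FTree.subtreeAt (j :: q) u = FTree.subtreeAt q c := by
          rw [subtreeAt_cons, hc]; rfl
        rw [hval]
        by_cases h2 : ∃ q', q' <+: j :: q ∧ q' ≠ j :: q ∧ SubstP φ L t (p ++ q')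
        · rw [if_pos (hcond.mpr h2), if_pos h2]
        · rw [if_neg (fun hh => h2 (hcond.mp hh)), if_neg h2]
          congr 1
          rw [List.append_assoc, List.singleton_append]



open Classical in
lemma subst_subtreeAt_root (x : List ℕ) :
    FTree.subtreeAt x (treeSubst φ L lab t) =
      if ∃ w, w <+: x ∧ w ≠ x ∧ SubstP φ L t w then none
      else (FTree.subtreeAt x t).map (fun v => substAuxT t φ L lab x v) := by
  have := subst_subtreeAt t φ L lab x [] t rfl
  simpa [treeSubst] using this

/-- Disjunction of formulas. -/
def orF (ψ χ : EFFormula A B) : EFFormula A B := .not (.and ψ.not χ.not)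

lemma sat_orF {t : FTree A B} {x ψ χ} : EFSat t x (orF ψ χ) ↔ EFSat t x ψ ∨ EFSat t x χ := by
  simp only [orF, sat_not, sat_and, not_and_or, not_not]

/-- A false formula (built from `φ` since the alphabet may be empty). -/
def falseF (φ : EFFormula A B) : EFFormula A B := .and φ φ.not

lemma sat_falseF {t : FTree A B} {x φ} : ¬ EFSat t x (falseF φ) := fun h => h.2 h.1

def bigOr (φ : EFFormula A B) : List (EFFormula A B) → EFFormula A B
  | [] => falseF φ
  | ψ :: l => orF ψ (bigOr φ l)

lemma sat_bigOr {t : FTree A B} {x φ} : ∀ {l}, EFSat t x (bigOr φ l) ↔ ∃ ψ ∈ l, EFSat t x ψ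
  | [] => by simp [bigOr, sat_falseF]
  | ψ :: l => by simp [bigOr, sat_orF, sat_bigOr (l := l)]

/-- Relativization of a formula to the subtree rooted at a node satisfying the antichain
formula `φ`.  The boolean flag is `true` at the root of the subtree. -/
def rel (φ : EFFormula A B) : Bool → EFFormula A B → EFFormula A B
  | _, .leafLab a => .leafLab a
  | _, .innerLab b => .innerLab b
  | r, .not ψ => .not (rel φ r ψ)
  | r, .and ψ χ => .and (rel φ r ψ) (rel φ r χ)
  | _, .EF ψ => .EF (rel φ false ψ)
  | true, .Finv _ => falseF φ
  | false, .Finv ψ =>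
      .Finv (orF (.and φ (rel φ true ψ)) (.and (.Finv φ) (rel φ false ψ)))

lemma rel_correct {φ : EFFormula A B} (hφ : AntichainFormula φ) (t u : FTree A B)
    (x : List ℕ) (hx : FTree.subtreeAt x t = some u) (hxv : EFSat t x φ) :
    ∀ (ψ : EFFormula A B) (q : List ℕ), (FTree.subtreeAt q u).isSome →
      (EFSat u q ψ ↔ EFSat t (x ++ q) (rel φ q.isEmpty ψ)) := by
  have hxs : (FTree.subtreeAt x t).isSome := by rw [hx]; rfl
  have key : ∀ q, FTree.subtreeAt (x ++ q) t = FTree.subtreeAt q u := by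
    intro q; rw [subtreeAt_append, hx]; rfl
  intro ψ
  induction ψ with
  | leafLab a => intro q hq; rw [rel]; simp only [sat_leaf, key]
  | innerLab b => intro q hq; rw [rel]; simp only [sat_inner, key]
  | not ψ ih => intro q hq; rw [rel]; simp only [sat_not, ih q hq]
  | and ψ χ ih ih' => intro q hq; rw [rel]; simp only [sat_and, ih q hq, ih' q hq]
  | EF ψ ih =>
    intro q hq
    rw [rel]
    simp only [sat_EF]
    constructor
    · rintro ⟨y, hpre, hne, hys, hy⟩
      have hyne : y.isEmpty = false := by
        cases y with
        | nil => exact absurd (List.prefix_nil.mp hpre) hne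
        | cons _ _ => rfl
      refine ⟨x ++ y, by simpa using hpre, by simpa using hne, by rwa [key], ?_⟩
      rw [← hyne]
      exact (ih y hys).mp hy
    · rintro ⟨z, hpre, hne, hzs, hz⟩
      obtain ⟨r, hr⟩ := hpre
      rw [List.append_assoc] at hr
      subst hr
      have hrne : r ≠ [] := by rintro rfl; simp at hne
      refine ⟨q ++ r, ⟨r, rfl⟩, by simpa using hrne, by rwa [← key], ?_⟩
      have hqr : (q ++ r).isEmpty = false := by
        cases q <;> cases r <;> simp_all
      exact (ih (q ++ r) (by rwa [← key])).mpr (by rw [hqr]; exact hz)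
  | Finv ψ ih =>
    intro q hq
    cases q with
    | nil =>
      simp only [List.isEmpty_nil, rel, sat_Finv]
      constructor
      · rintro ⟨y, hpre, hne, -⟩
        exact absurd (List.prefix_nil.mp hpre) hne
      · intro h; exact absurd h sat_falseF
    | cons j q0 =>
      simp only [List.isEmpty_cons, rel, sat_Finv]
      set q := j :: q0 with hqdef
      have hxqs : (FTree.subtreeAt (x ++ q) t).isSome := by rwa [key]
      constructor
      · rintro ⟨y, hpre, hne, hy⟩
        have hys : (FTree.subtreeAt y u).isSome := isSome_of_prefix hpre hq
        refine ⟨x ++ y, by simpa using hpre, by simpa using hne, ?_⟩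
        rw [sat_orF]
        cases hye : y.isEmpty with
        | true =>
          have : y = [] := by cases y <;> simp_all
          subst this
          left
          rw [sat_and, List.append_nil]
          refine ⟨hxv, ?_⟩
          have := (ih [] (by rw [subtreeAt_nil]; rfl)).mp hy
          simpa using this
        | false =>
          right
          rw [sat_and]
          constructor
          · rw [sat_Finv]
            refine ⟨x, List.prefix_append _ _, ?_, hxv⟩
            intro hcon
            have h0 : [] = y := by
              have := congrArg List.length hcon
              simp at this
              exact this.symm
            rw [← h0] at hye
            simp at hye
          · rw [← hye]; exact (ih y hys).mp hy
      · rintro ⟨w, hpre, hne, hw⟩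
        rw [sat_orF] at hw
        have hws : (FTree.subtreeAt w t).isSome := isSome_of_prefix hpre hxqs
        cases hw with
        | inl hw =>
          rw [sat_and] at hw
          -- w and x are comparable prefixes of x ++ q, both satisfy φ, so w = x
          have hcomp : w <+: x ∨ x <+: w :=
            List.prefix_or_prefix_of_prefix hpre (List.prefix_append _ _)
          have hwx : w = x := by
            cases hcomp with
            | inl h => exact hφ t w x hws hxs hw.1 hxv h
            | inr h => exact (hφ t x w hxs hws hxv hw.1 h).symm
          subst hwx
          refine ⟨[], List.nil_prefix, by simp [hqdef], ?_⟩
          have := (ih [] (by rw [subtreeAt_nil]; rfl)).mpr (by simpa using hw.2)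
          exact this
        | inr hw =>
          rw [sat_and, sat_Finv] at hw
          obtain ⟨⟨v, hvpre, hvne, hv⟩, hw2⟩ := hw
          have hvs : (FTree.subtreeAt v t).isSome :=
            isSome_of_prefix (hvpre.trans hpre) hxqs
          have hvx : v = x := by
            have hcomp : v <+: x ∨ x <+: v :=
              List.prefix_or_prefix_of_prefix (hvpre.trans hpre) (List.prefix_append _ _)
            cases hcomp with
            | inl h => exact hφ t v x hvs hxs hv hxv h
            | inr h => exact (hφ t x v hxs hvs hxv hv h).symm
          subst hvx
          -- so x <+: w strictly: w = x ++ y with y ≠ []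
          obtain ⟨y, rfl⟩ := hvpre
          have hyne : y ≠ [] := by rintro rfl; simp at hvne
          have hypre : y <+: q := by
            have := hpre
            rwa [List.prefix_append_right_inj] at this
          have hyq : y ≠ q := by
            intro h; subst h; exact hne rfl
          have hys : (FTree.subtreeAt y u).isSome := isSome_of_prefix hypre hq
          refine ⟨y, hypre, hyq, ?_⟩
          have hyemp : y.isEmpty = false := by cases y <;> simp_all
          exact (ih y hys).mpr (by rw [hyemp]; exact hw2)


open Classical in
lemma substAuxT_leaf_iff (hdisj : ∀ (i j : Fin n) (v : FTree A B), v ∈ L i → v ∈ L j → i = j)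
    (p : List ℕ) (u : FTree A B) (a : A) :
    substAuxT t φ L lab p u = .leaf a ↔
      ((EFSat t p φ ∧ ∃ i, u ∈ L i ∧ lab i = a) ∨
        (¬ (EFSat t p φ ∧ ∃ i, u ∈ L i) ∧ u = .leaf a)) := by
  cases u with
  | leaf a' =>
    rw [substAuxT]
    split_ifs with h
    · have hch := h.2.choose_spec
      constructor
      · intro he
        injection he with he
        exact Or.inl ⟨h.1, h.2.choose, hch, he⟩
      · rintro (⟨-, i, hi, hlab⟩ | ⟨hc, -⟩)
        · have : i = h.2.choose := hdisj _ _ _ hi hch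
          rw [← this, hlab]
        · exact absurd h hc
    · constructor
      · intro he; exact Or.inr ⟨h, he⟩
      · rintro (⟨hs, i, hi, -⟩ | ⟨-, he⟩)
        · exact absurd ⟨hs, i, hi⟩ h
        · exact he
  | node b f =>
    rw [substAuxT]
    split_ifs with h
    · have hch := h.2.choose_spec
      constructor
      · intro he
        injection he with he
        exact Or.inl ⟨h.1, h.2.choose, hch, he⟩
      · rintro (⟨-, i, hi, hlab⟩ | ⟨hc, -⟩)
        · have : i = h.2.choose := hdisj _ _ _ hi hch
          rw [← this, hlab]
        · exact absurd h hc
    · constructor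
      · intro he; exact absurd he (by simp)
      · rintro (⟨hs, i, hi, -⟩ | ⟨-, he⟩)
        · exact absurd ⟨hs, i, hi⟩ h
        · exact absurd he (by simp)

open Classical in
lemma substAuxT_node_iff (p : List ℕ) (u : FTree A B) (b : B) :
    (∃ f', substAuxT t φ L lab p u = .node b f') ↔
      (¬ (EFSat t p φ ∧ ∃ i, u ∈ L i) ∧ ∃ f, u = .node b f) := by
  cases u with
  | leaf a' =>
    rw [substAuxT]
    split_ifs with h <;> simp
  | node b' f =>
    rw [substAuxT]
    split_ifs with h
    · simp only [FTree.node.injEq]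
      constructor
      · rintro ⟨f', hf'⟩; exact absurd hf' (by simp)
      · rintro ⟨hc, -⟩; exact absurd h hc
    · simp only [FTree.node.injEq]
      constructor
      · rintro ⟨f', rfl, -⟩; exact ⟨h, f, rfl, rfl⟩
      · rintro ⟨-, f'', rfl, -⟩; exact ⟨_, rfl, rfl⟩

/-- The main translation: `Ttrans σ leafSel ψ` holds at a surviving node of `t` iff `ψ`
holds at the corresponding node of the substituted tree. -/
def Ttrans (σ : EFFormula A B) (leafSel : A → EFFormula A B) : EFFormula A B → EFFormula A B
  | .leafLab a => orF (leafSel a) (.and (.not σ) (.leafLab a))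
  | .innerLab b => .and (.not σ) (.innerLab b)
  | .not ψ => .not (Ttrans σ leafSel ψ)
  | .and ψ χ => .and (Ttrans σ leafSel ψ) (Ttrans σ leafSel χ)
  | .EF ψ => .EF (.and (.not (.Finv σ)) (Ttrans σ leafSel ψ))
  | .Finv ψ => .Finv (Ttrans σ leafSel ψ)

lemma prefix_antisymm {x y : List ℕ} (h1 : x <+: y) (h2 : y <+: x) : x = y :=
  h1.sublist.antisymm h2.sublist

lemma T_correct {φ : EFFormula A B} {n : ℕ} {L : Fin n → Set (FTree A B)} {lab : Fin n → A}
    (hdisj : ∀ (i j : Fin n) (v : FTree A B), v ∈ L i → v ∈ L j → i = j)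
    (σ : EFFormula A B) (leafSel : A → EFFormula A B) (t : FTree A B)
    (hσ : ∀ x, (FTree.subtreeAt x t).isSome → (EFSat t x σ ↔ SubstP φ L t x))
    (hleaf : ∀ (a : A) (x : List ℕ) (u : FTree A B), FTree.subtreeAt x t = some u →
      (EFSat t x (leafSel a) ↔ (EFSat t x φ ∧ ∃ i, u ∈ L i ∧ lab i = a))) :
    ∀ (ψ : EFFormula A B) (x : List ℕ) (u : FTree A B), FTree.subtreeAt x t = some u →
      (∀ w, w <+: x → w ≠ x → ¬ SubstP φ L t w) →
      (EFSat (treeSubst φ L lab t) x ψ ↔ EFSat t x (Ttrans σ leafSel ψ)) := by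
  classical
  set s := treeSubst φ L lab t with hs
  have hsx : ∀ (x : List ℕ) (u : FTree A B), FTree.subtreeAt x t = some u →
      (∀ w, w <+: x → w ≠ x → ¬ SubstP φ L t w) →
      FTree.subtreeAt x s = some (substAuxT t φ L lab x u) := by
    intro x u hx hsur
    rw [hs, subst_subtreeAt_root, if_neg, hx, Option.map_some]
    rintro ⟨w, h1, h2, h3⟩
    exact hsur w h1 h2 h3
  have hvalid : ∀ y, (FTree.subtreeAt y s).isSome ↔
      ((FTree.subtreeAt y t).isSome ∧ ∀ w, w <+: y → w ≠ y → ¬ SubstP φ L t w) := by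
    intro y
    rw [hs, subst_subtreeAt_root]
    split_ifs with h
    · simp only [Option.isSome_none, Bool.false_eq_true, false_iff, not_and]
      intro _
      obtain ⟨w, h1, h2, h3⟩ := h
      intro hall
      exact hall w h1 h2 h3
    · constructor
      · intro h'
        have h'' : (FTree.subtreeAt y t).isSome := by
          cases hv : FTree.subtreeAt y t with
          | none => rw [hv] at h'; simp at h'
          | some v => rfl
        exact ⟨h'', fun w h1 h2 h3 => h ⟨w, h1, h2, h3⟩⟩
      · rintro ⟨h', -⟩
        cases hv : FTree.subtreeAt y t with
        | none => rw [hv] at h'; simp at h'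
        | some v => rfl
  have claimF : ∀ y, (FTree.subtreeAt y t).isSome →
      (EFSat t y (.Finv σ) ↔ ∃ w, w <+: y ∧ w ≠ y ∧ SubstP φ L t w) := by
    intro y hy
    rw [sat_Finv]
    constructor
    · rintro ⟨w, h1, h2, h3⟩
      exact ⟨w, h1, h2, (hσ w (isSome_of_prefix h1 hy)).mp h3⟩
    · rintro ⟨w, h1, h2, h3⟩
      exact ⟨w, h1, h2, (hσ w (isSome_of_prefix h1 hy)).mpr h3⟩
  intro ψ
  induction ψ with
  | leafLab a =>
    intro x u hx hsur
    rw [Ttrans, sat_orF, sat_and, sat_not]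
    rw [sat_leaf, hsx x u hx hsur, Option.some_inj,
      substAuxT_leaf_iff t φ L lab hdisj x u a]
    rw [hleaf a x u hx, hσ x (by rw [hx]; rfl), substP_iff t φ L hx, sat_leaf, hx,
      Option.some_inj]
  | innerLab b =>
    intro x u hx hsur
    rw [Ttrans, sat_and, sat_not]
    rw [sat_inner]
    have : ∀ f', (FTree.subtreeAt x s = some (.node b f')) ↔
        substAuxT t φ L lab x u = .node b f' := by
      intro f'
      rw [hsx x u hx hsur, Option.some_inj]
    simp only [this]
    rw [substAuxT_node_iff t φ L lab x u b]
    rw [hσ x (by rw [hx]; rfl), substP_iff t φ L hx, sat_inner]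
    constructor
    · rintro ⟨h1, f'', rfl⟩
      exact ⟨h1, f'', hx⟩
    · rintro ⟨h1, f'', hf⟩
      rw [hx, Option.some_inj] at hf
      exact ⟨h1, f'', hf⟩
  | not ψ ih =>
    intro x u hx hsur
    rw [Ttrans, sat_not, sat_not, ih x u hx hsur]
  | and ψ χ ih ih' =>
    intro x u hx hsur
    rw [Ttrans, sat_and, sat_and, ih x u hx hsur, ih' x u hx hsur]
  | EF ψ ih =>
    intro x u hx hsur
    rw [Ttrans, sat_EF, sat_EF]
    constructor
    · rintro ⟨y, h1, h2, h3, h4⟩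
      obtain ⟨hyt, hysur⟩ := (hvalid y).mp h3
      obtain ⟨v, hv⟩ := Option.isSome_iff_exists.mp hyt
      refine ⟨y, h1, h2, hyt, ?_⟩
      rw [sat_and, sat_not]
      refine ⟨?_, (ih y v hv hysur).mp h4⟩
      rw [claimF y hyt]
      rintro ⟨w, hw1, hw2, hw3⟩
      exact hysur w hw1 hw2 hw3
    · rintro ⟨y, h1, h2, h3, h4⟩
      rw [sat_and, sat_not, claimF y h3] at h4
      have hysur : ∀ w, w <+: y → w ≠ y → ¬ SubstP φ L t w := by
        intro w hw1 hw2 hw3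
        exact h4.1 ⟨w, hw1, hw2, hw3⟩
      obtain ⟨v, hv⟩ := Option.isSome_iff_exists.mp h3
      refine ⟨y, h1, h2, ?_, (ih y v hv hysur).mpr h4.2⟩
      exact (hvalid y).mpr ⟨h3, hysur⟩
  | Finv ψ ih =>
    intro x u hx hsur
    rw [Ttrans, sat_Finv, sat_Finv]
    have hwork : ∀ w, w <+: x → w ≠ x →
        ((FTree.subtreeAt w t).isSome ∧ ∀ w', w' <+: w → w' ≠ w → ¬ SubstP φ L t w') := by
      intro w h1 h2
      refine ⟨isSome_of_prefix h1 (by rw [hx]; rfl), ?_⟩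
      intro w' hw1 hw2
      refine hsur w' (hw1.trans h1) ?_
      rintro rfl
      exact hw2 (prefix_antisymm hw1 h1)
    constructor
    · rintro ⟨w, h1, h2, h3⟩
      obtain ⟨hws, hwsur⟩ := hwork w h1 h2
      obtain ⟨v, hv⟩ := Option.isSome_iff_exists.mp hws
      exact ⟨w, h1, h2, (ih w v hv hwsur).mp h3⟩
    · rintro ⟨w, h1, h2, h3⟩
      obtain ⟨hws, hwsur⟩ := hwork w h1 h2
      obtain ⟨v, hv⟩ := Option.isSome_iff_exists.mp hws
      exact ⟨w, h1, h2, (ih w v hv hwsur).mpr h3⟩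

end ACP


/-- antichain composition principle: if `φ` is an antichain formula,
`L₁,…,Lₙ` are pairwise disjoint tree-definable languages, `a₁,…,aₙ ∈ A` are leaf labels
and `K` is tree-definable, then `{t : t[(L₁,φ)→a₁,…,(Lₙ,φ)→aₙ] ∈ K}` is tree-definable. -/
theorem antichain_composition {A B : Type} [Finite A] [Finite B]
    (φ : EFFormula A B) (hφ : AntichainFormula φ)
    {n : ℕ} (L : Fin n → Set (FTree A B))
    (hdisj : ∀ (i j : Fin n) (t : FTree A B), t ∈ L i → t ∈ L j → i = j)
    (hdef : ∀ i, TreeDefinable (L i))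
    (lab : Fin n → A)
    (K : Set (FTree A B)) (hK : TreeDefinable K) :
    TreeDefinable {t : FTree A B | treeSubst φ L lab t ∈ K} := by
  classical
  open ACP in
  obtain ⟨ψK, hψK⟩ := hK
  choose ψL hψL using hdef
  set σi : Fin n → EFFormula A B := fun i => .and φ (ACP.rel φ true (ψL i)) with hσi
  set σ : EFFormula A B := ACP.bigOr φ ((List.finRange n).map σi) with hσdef
  set leafSel : A → EFFormula A B := fun a =>
    ACP.bigOr φ (((List.finRange n).filter (fun i => decide (lab i = a))).map σi) with hlsdef
  -- key satisfaction lemma for σi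
  have hσi_sat : ∀ (t : FTree A B) (x : List ℕ) (u : FTree A B) (i : Fin n),
      FTree.subtreeAt x t = some u →
      (EFSat t x (σi i) ↔ (EFSat t x φ ∧ u ∈ L i)) := by
    intro t x u i hx
    rw [hσi]
    rw [ACP.sat_and]
    constructor
    · rintro ⟨h1, h2⟩
      refine ⟨h1, ?_⟩
      rw [hψL i u]
      have := (ACP.rel_correct hφ t u x hx h1 (ψL i) [] (by rw [ACP.subtreeAt_nil]; rfl))
      simp only [List.isEmpty_nil, List.append_nil] at this
      exact this.mpr h2
    · rintro ⟨h1, h2⟩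
      refine ⟨h1, ?_⟩
      rw [hψL i u] at h2
      have := (ACP.rel_correct hφ t u x hx h1 (ψL i) [] (by rw [ACP.subtreeAt_nil]; rfl))
      simp only [List.isEmpty_nil, List.append_nil] at this
      exact this.mp h2
  refine ⟨ACP.Ttrans σ leafSel ψK, fun t => ?_⟩
  have hσ_sat : ∀ x, (FTree.subtreeAt x t).isSome →
      (EFSat t x σ ↔ ACP.SubstP φ L t x) := by
    intro x hx
    obtain ⟨u, hu⟩ := Option.isSome_iff_exists.mp hx
    rw [hσdef, ACP.sat_bigOr, ACP.substP_iff t φ L hu]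
    constructor
    · rintro ⟨ψ', hmem, hsat⟩
      simp only [List.mem_map, List.mem_finRange, true_and] at hmem
      obtain ⟨i, rfl⟩ := hmem
      obtain ⟨h1, h2⟩ := (hσi_sat t x u i hu).mp hsat
      exact ⟨h1, i, h2⟩
    · rintro ⟨h1, i, h2⟩
      exact ⟨σi i, by simp, (hσi_sat t x u i hu).mpr ⟨h1, h2⟩⟩
  have hleaf_sat : ∀ (a : A) (x : List ℕ) (u : FTree A B), FTree.subtreeAt x t = some u →
      (EFSat t x (leafSel a) ↔ (EFSat t x φ ∧ ∃ i, u ∈ L i ∧ lab i = a)) := by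
    intro a x u hu
    rw [hlsdef]
    rw [ACP.sat_bigOr]
    constructor
    · rintro ⟨ψ', hmem, hsat⟩
      simp only [List.mem_map, List.mem_filter, List.mem_finRange, true_and,
        decide_eq_true_eq] at hmem
      obtain ⟨i, hlab, rfl⟩ := hmem
      obtain ⟨h1, h2⟩ := (hσi_sat t x u i hu).mp hsat
      exact ⟨h1, i, h2, hlab⟩
    · rintro ⟨h1, i, h2, h3⟩
      refine ⟨σi i, ?_, (hσi_sat t x u i hu).mpr ⟨h1, h2⟩⟩
      simp only [List.mem_map, List.mem_filter, List.mem_finRange, true_and,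
        decide_eq_true_eq]
      exact ⟨i, h3, rfl⟩
  have := ACP.T_correct hdisj σ leafSel t hσ_sat hleaf_sat ψK [] t rfl
    (by
      intro w h1 h2
      exact absurd (List.prefix_nil.mp h1) h2)
  constructor
  · intro ht
    exact this.mp ((hψK _).mp ht)
  · intro ht
    exact (hψK _).mpr (this.mpr ht)
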